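/- Let G be a finite simple connected graph of diameter 2 on vertex set [n]. If G is vertex diameter-2-critical (i.e., diam(G - x) >= 3 for every vertex x), then the maximal ideal m = (x_1,...,x_n) is an associated prime of S/NI(G)^2; specifically, NI(G)^2 : (x_1...x_n) = m. -/

import Mathlib

open MvPolynomial
open scoped Classical

/-- The closed neighborhood of a vertex `i` of `G`, as a `Finset`. -/
noncomputable def closedNbhd {n : ℕ} (G : SimpleGraph (Fin n)) (i : Fin n) : Finset (Fin n) :=
  Finset.univ.filter (fun j => j = i ∨ G.Adj i j)

/-- The closed neighborhood ideal of `G` in `k[x_1, …, x_n]`. -/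
noncomputable def NI (k : Type*) [Field k] {n : ℕ} (G : SimpleGraph (Fin n)) :
    Ideal (MvPolynomial (Fin n) k) :=
  Ideal.span (Set.range fun i => ∏ j ∈ closedNbhd G i, X j)

/-- The maximal homogeneous ideal `(x_1, …, x_n)`. -/
noncomputable def maxIdeal (k : Type*) [Field k] (n : ℕ) : Ideal (MvPolynomial (Fin n) k) :=
  Ideal.span (Set.range (X : Fin n → MvPolynomial (Fin n) k))

/-- The exponent vector of the squarefree monomial supported on `A`. -/
noncomputable def expo {n : ℕ} (A : Finset (Fin n)) : Fin n →₀ ℕ :=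
  ∑ j ∈ A, Finsupp.single j 1

lemma expo_apply {n : ℕ} (A : Finset (Fin n)) (i : Fin n) :
    expo A i = if i ∈ A then 1 else 0 := by
  classical
  rw [expo, Finset.sum_apply']
  simp [Finsupp.single_apply]

lemma prod_X_eq {n : ℕ} {k : Type*} [Field k] (A : Finset (Fin n)) :
    (∏ j ∈ A, X j : MvPolynomial (Fin n) k) = monomial (expo A) 1 := by
  classical
  induction A using Finset.induction with
  | empty => simp [expo]
  | @insert a A h ih =>
      rw [Finset.prod_insert h, ih, X, monomial_mul, one_mul]
      congr 1
      rw [expo, expo, Finset.sum_insert h]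

lemma mem_closedNbhd {n : ℕ} (G : SimpleGraph (Fin n)) (i j : Fin n) :
    j ∈ closedNbhd G i ↔ j = i ∨ G.Adj i j := by
  simp [closedNbhd]

lemma common_closed {n : ℕ} (G : SimpleGraph (Fin n)) (hconn : G.Connected) {u v : Fin n}
    (h : G.edist u v ≤ 2) : ∃ z, z ∈ closedNbhd G u ∧ z ∈ closedNbhd G v := by
  obtain ⟨p, hp⟩ := hconn.exists_walk_length_eq_edist u v
  have hl : p.length ≤ 2 := by
    rw [← hp] at h
    exact_mod_cast h
  cases p with
  | nil => exact ⟨u, (mem_closedNbhd G u u).mpr (Or.inl rfl), (mem_closedNbhd G u u).mpr (Or.inl rfl)⟩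
  | cons h1 q =>
    cases q with
    | nil =>
        exact ⟨v, (mem_closedNbhd G u v).mpr (Or.inr h1), (mem_closedNbhd G v v).mpr (Or.inl rfl)⟩
    | cons h2 r =>
      cases r with
      | nil =>
          exact ⟨_, (mem_closedNbhd G u _).mpr (Or.inr h1),
            (mem_closedNbhd G v _).mpr (Or.inr h2.symm)⟩
      | cons h3 s =>
          simp [SimpleGraph.Walk.length_cons] at hl

lemma inter_subset_single {n : ℕ} (G : SimpleGraph (Fin n)) (t : Fin n)
    {v w : ({y : Fin n | y ≠ t} : Set (Fin n))}
    (h3 : 3 ≤ (G.induce {y : Fin n | y ≠ t}).edist v w) :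
    ∀ z, z ∈ closedNbhd G ↑v → z ∈ closedNbhd G ↑w → z = t := by
  intro z hzv hzw
  by_contra hzt
  rw [mem_closedNbhd] at hzv hzw
  have hzS : z ∈ ({y : Fin n | y ≠ t} : Set (Fin n)) := hzt
  rcases hzv with rfl | hv
  · rcases hzw with hvw | hw
    · have : v = w := Subtype.ext hvw
      rw [this, SimpleGraph.edist_self] at h3
      norm_num at h3
    · have hadj : (G.induce {y : Fin n | y ≠ t}).Adj v w := by
        simp only [SimpleGraph.comap_adj, Function.Embedding.coe_subtype]
        exact hw.symm
      have := SimpleGraph.edist_le (SimpleGraph.Walk.cons hadj SimpleGraph.Walk.nil)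
      simp only [SimpleGraph.Walk.length_cons, SimpleGraph.Walk.length_nil] at this
      have h32 := h3.trans this
      norm_num at h32
  · rcases hzw with rfl | hw
    · have hadj : (G.induce {y : Fin n | y ≠ t}).Adj v w := by
        simp only [SimpleGraph.comap_adj, Function.Embedding.coe_subtype]
        exact hv
      have := SimpleGraph.edist_le (SimpleGraph.Walk.cons hadj SimpleGraph.Walk.nil)
      simp only [SimpleGraph.Walk.length_cons, SimpleGraph.Walk.length_nil] at this
      have h32 := h3.trans this
      norm_num at h32
    · have hadj1 : (G.induce {y : Fin n | y ≠ t}).Adj v ⟨z, hzS⟩ := by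
        simp only [SimpleGraph.comap_adj, Function.Embedding.coe_subtype]
        exact hv
      have hadj2 : (G.induce {y : Fin n | y ≠ t}).Adj ⟨z, hzS⟩ w := by
        simp only [SimpleGraph.comap_adj, Function.Embedding.coe_subtype]
        exact hw.symm
      have := SimpleGraph.edist_le
        (SimpleGraph.Walk.cons hadj1 (SimpleGraph.Walk.cons hadj2 SimpleGraph.Walk.nil))
      simp only [SimpleGraph.Walk.length_cons, SimpleGraph.Walk.length_nil] at this
      have h32 := h3.trans this
      norm_num at h32

lemma maxIdeal_eq_ker {n : ℕ} {k : Type*} [Field k] :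
    maxIdeal k n = RingHom.ker (constantCoeff : MvPolynomial (Fin n) k →+* k) := by
  apply le_antisymm
  · rw [maxIdeal, Ideal.span_le]
    rintro _ ⟨i, rfl⟩
    simp [RingHom.mem_ker]
  · intro p hp
    have key : ∀ q : MvPolynomial (Fin n) k, q - C (constantCoeff q) ∈ maxIdeal k n := by
      intro q
      induction q using MvPolynomial.induction_on with
      | C a => simp
      | add p q hp hq =>
          have h := Ideal.add_mem _ hp hq
          have : p + q - C (constantCoeff (p + q)) =
              (p - C (constantCoeff p)) + (q - C (constantCoeff q)) := by
            rw [map_add, C_add]; ring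
          rw [this]; exact h
      | mul_X p i _ =>
          have : p * X i - C (constantCoeff (p * X i)) = p * X i := by
            simp
          rw [this]
          exact Ideal.mul_mem_left _ p (Ideal.subset_span ⟨i, rfl⟩)
    have h := key p
    rw [RingHom.mem_ker] at hp
    rwa [hp, map_zero, sub_zero] at h

lemma maxIdeal_isMaximal {n : ℕ} {k : Type*} [Field k] : (maxIdeal k n).IsMaximal := by
  rw [maxIdeal_eq_ker]
  exact RingHom.ker_isMaximal_of_surjective _ (fun a => ⟨C a, constantCoeff_C _ a⟩)

lemma NI_sq_eq {n : ℕ} {k : Type*} [Field k] (G : SimpleGraph (Fin n)) :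
    NI k G ^ 2 = Ideal.span ((fun s => monomial s (1 : k)) ''
      {d | ∃ u v : Fin n, expo (closedNbhd G u) + expo (closedNbhd G v) = d}) := by
  rw [pow_two, NI]
  have hset : (Set.range fun i => ∏ j ∈ closedNbhd G i, (X j : MvPolynomial (Fin n) k)) =
      (fun s => monomial s (1 : k)) '' (Set.range fun i => expo (closedNbhd G i)) := by
    have hfun : (fun i => ∏ j ∈ closedNbhd G i, (X j : MvPolynomial (Fin n) k)) =
        (fun s => monomial s (1 : k)) ∘ (fun i => expo (closedNbhd G i)) := by
      funext i
      exact prod_X_eq _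
    rw [hfun, Set.range_comp]
  rw [hset, Ideal.span_mul_span']
  congr 1
  ext p
  simp only [Set.mem_mul, Set.mem_image, Set.mem_range, Set.mem_setOf_eq]
  constructor
  · rintro ⟨_, ⟨_, ⟨u, rfl⟩, rfl⟩, _, ⟨_, ⟨v, rfl⟩, rfl⟩, rfl⟩
    exact ⟨_, ⟨u, v, rfl⟩, by rw [monomial_mul, one_mul]⟩
  · rintro ⟨_, ⟨u, v, rfl⟩, rfl⟩
    exact ⟨_, ⟨_, ⟨u, rfl⟩, rfl⟩, _, ⟨_, ⟨v, rfl⟩, rfl⟩, by rw [monomial_mul, one_mul]⟩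

lemma prod_not_mem {n : ℕ} {k : Type*} [Field k] (G : SimpleGraph (Fin n))
    (hconn : G.Connected) (hdiam_le : ∀ u v : Fin n, G.edist u v ≤ 2) :
    (∏ i : Fin n, X i : MvPolynomial (Fin n) k) ∉ NI k G ^ 2 := by
  classical
  intro h
  rw [NI_sq_eq, prod_X_eq, mem_ideal_span_monomial_image] at h
  have hs : (monomial (expo (Finset.univ : Finset (Fin n))) (1 : k)).support
      = {expo (Finset.univ : Finset (Fin n))} := by
    rw [support_monomial, if_neg one_ne_zero]
  obtain ⟨d, ⟨u, v, rfl⟩, hle⟩ := h _ (by rw [hs]; exact Finset.mem_singleton_self _)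
  obtain ⟨z, hzu, hzv⟩ := common_closed G hconn (hdiam_le u v)
  have h2 := hle z
  rw [Finsupp.add_apply, expo_apply, expo_apply, expo_apply, if_pos hzu, if_pos hzv,
    if_pos (Finset.mem_univ z)] at h2
  omega

lemma Xt_prod_mem {n : ℕ} {k : Type*} [Field k] (G : SimpleGraph (Fin n))
    (hcrit : ∀ x : Fin n, ∃ v w : ({y : Fin n | y ≠ x} : Set (Fin n)),
      3 ≤ (G.induce {y : Fin n | y ≠ x}).edist v w) (t : Fin n) :
    X t * (∏ i : Fin n, X i : MvPolynomial (Fin n) k) ∈ NI k G ^ 2 := by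
  classical
  obtain ⟨v, w, h3⟩ := hcrit t
  have hsub := inter_subset_single G t h3
  have hmem : monomial (expo (closedNbhd G ↑v) + expo (closedNbhd G ↑w)) (1 : k) ∈ NI k G ^ 2 := by
    rw [NI_sq_eq]
    exact Ideal.subset_span ⟨_, ⟨_, _, rfl⟩, rfl⟩
  have hdvd : (monomial (expo (closedNbhd G ↑v) + expo (closedNbhd G ↑w)) (1 : k)) ∣
      X t * ∏ i : Fin n, X i := by
    have heq : (X t * ∏ i : Fin n, X i : MvPolynomial (Fin n) k) =
        monomial (Finsupp.single t 1 + expo Finset.univ) 1 := by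
      rw [prod_X_eq, X, monomial_mul, one_mul]
    rw [heq, monomial_dvd_monomial]
    refine ⟨Or.inr (fun i => ?_), dvd_refl _⟩
    rw [Finsupp.add_apply, Finsupp.add_apply, Finsupp.single_apply, expo_apply, expo_apply,
      expo_apply, if_pos (Finset.mem_univ i)]
    by_cases hiv : i ∈ closedNbhd G ↑v
    · by_cases hiw : i ∈ closedNbhd G ↑w
      · have hit : t = i := (hsub i hiv hiw).symm
        rw [if_pos hiv, if_pos hiw, if_pos hit]
      · rw [if_pos hiv, if_neg hiw]
        split_ifs <;> omega
    · rw [if_neg hiv]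
      split_ifs <;> omega
  obtain ⟨c, hc⟩ := hdvd
  rw [hc]
  exact Ideal.mul_mem_right _ _ hmem

/-- If `G` is a connected graph of diameter `2` which is vertex diameter-2-critical
(deleting any vertex raises the diameter to at least `3`), then
`NI(G)^2 : (x_1 ⋯ x_n) = (x_1, …, x_n)`; in particular the maximal homogeneous ideal is an
associated prime of `S/NI(G)^2`. -/
theorem maxIdeal_isAssociatedPrime_of_critical {n : ℕ} {k : Type*} [Field k]
    (G : SimpleGraph (Fin n)) (hconn : G.Connected)
    (hdiam_le : ∀ u v : Fin n, G.edist u v ≤ 2)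
    (hdiam_eq : ∃ u v : Fin n, G.edist u v = 2)
    (hcrit : ∀ x : Fin n, ∃ v w : ({y : Fin n | y ≠ x} : Set (Fin n)),
      3 ≤ (G.induce {y : Fin n | y ≠ x}).edist v w) :
    Submodule.colon (NI k G ^ 2)
        (Ideal.span {∏ i : Fin n, (X i : MvPolynomial (Fin n) k)}) = maxIdeal k n ∧
    IsAssociatedPrime (maxIdeal k n) (MvPolynomial (Fin n) k ⧸ (NI k G ^ 2)) := by
  classical
  have hmax : (maxIdeal k n).IsMaximal := maxIdeal_isMaximal
  have hnotmem := prod_not_mem G hconn hdiam_le (k := k)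
  have hle : maxIdeal k n ≤ Submodule.colon (NI k G ^ 2)
      (Ideal.span {∏ i : Fin n, (X i : MvPolynomial (Fin n) k)}) := by
    rw [maxIdeal, Ideal.span_le]
    rintro _ ⟨t, rfl⟩
    exact Ideal.mem_colon_span_singleton.mpr (Xt_prod_mem G hcrit t)
  have hne : Submodule.colon (NI k G ^ 2)
      (Ideal.span {∏ i : Fin n, (X i : MvPolynomial (Fin n) k)}) ≠ ⊤ := by
    intro h
    have h1 : (1 : MvPolynomial (Fin n) k) ∈ Submodule.colon (NI k G ^ 2)
        (Ideal.span {∏ i : Fin n, (X i : MvPolynomial (Fin n) k)}) := by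
      rw [h]; exact Submodule.mem_top
    rw [Ideal.mem_colon_span_singleton, one_mul] at h1
    exact hnotmem h1
  have hcol : Submodule.colon (NI k G ^ 2)
      (Ideal.span {∏ i : Fin n, (X i : MvPolynomial (Fin n) k)}) = maxIdeal k n :=
    (hmax.eq_of_le hne hle).symm
  refine ⟨hcol, hmax.isPrime, Submodule.Quotient.mk (∏ i : Fin n, X i), ?_⟩
  rw [← hmax.isPrime.radical]
  congr 1
  ext r
  rw [Submodule.mem_colon_singleton, ← Submodule.Quotient.mk_smul, Submodule.mem_bot _,
    Submodule.Quotient.mk_eq_zero, smul_eq_mul, ← Ideal.mem_colon_span_singleton, hcol]
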